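/- Let k be a field, H a finite set of points in kⁿ with multiplicity structures given by lower sets, defining m functionals L₁,…,L_m (partial derivatives at the points indexed by elements of the lower sets). Then the vanishing ideal I(H) = { f ∈ k[X₁,…,X_n] : Lᵢ(f)=0 for all i } satisfies dim_k (k[X]/I(H)) = m. -/

import Mathlib

def IsLowerSetN {n : ℕ} (D : Set (Fin n → ℕ)) : Prop :=
  ∀ d ∈ D, ∀ i : Fin n, d i ≠ 0 → Function.update d i (d i - 1) ∈ D

/-- The mixed partial derivative `∂^{d₁+…+d_n} / ∂x₁^{d₁}…∂x_n^{d_n}`. -/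
noncomputable def mderiv {n : ℕ} {k : Type*} [CommSemiring k]
    (d : Fin n → ℕ) (f : MvPolynomial (Fin n) k) : MvPolynomial (Fin n) k :=
  (List.finRange n).foldr (fun i g => (fun h => MvPolynomial.pderiv i h)^[d i] g) f

open MvPolynomial

section Aux
variable {n : ℕ} {k : Type*} [CommRing k]

/-- fold of iterated partial derivatives over a list of variables -/
noncomputable def mderivL (L : List (Fin n)) (d : Fin n → ℕ) (f : MvPolynomial (Fin n) k) :
    MvPolynomial (Fin n) k :=
  L.foldr (fun i g => (fun h => MvPolynomial.pderiv i h)^[d i] g) f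

lemma mderiv_eq_mderivL (d : Fin n → ℕ) (f : MvPolynomial (Fin n) k) :
    mderiv d f = mderivL (List.finRange n) d f := rfl

lemma mderivL_nil (d : Fin n → ℕ) (f : MvPolynomial (Fin n) k) :
    mderivL [] d f = f := rfl

lemma mderivL_cons (c : Fin n) (L : List (Fin n)) (d : Fin n → ℕ) (f : MvPolynomial (Fin n) k) :
    mderivL (c :: L) d f = (fun h => MvPolynomial.pderiv c h)^[d c] (mderivL L d f) := rfl

lemma pditer_add (i : Fin n) (m : ℕ) (f g : MvPolynomial (Fin n) k) :
    (fun h => pderiv i h)^[m] (f + g)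
      = (fun h => pderiv i h)^[m] f + (fun h => pderiv i h)^[m] g := by
  induction m with
  | zero => simp
  | succ m ih => simp [Function.iterate_succ_apply', ih, map_add]

lemma pditer_smul (i : Fin n) (m : ℕ) (c : k) (f : MvPolynomial (Fin n) k) :
    (fun h => pderiv i h)^[m] (c • f) = c • (fun h => pderiv i h)^[m] f := by
  induction m with
  | zero => simp
  | succ m ih => simp [Function.iterate_succ_apply', ih, map_smul]

lemma mderivL_add (L : List (Fin n)) (d : Fin n → ℕ) (f g : MvPolynomial (Fin n) k) :
    mderivL L d (f + g) = mderivL L d f + mderivL L d g := by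
  induction L with
  | nil => rfl
  | cons c L ih => simp [mderivL_cons, ih, pditer_add]

lemma mderivL_smul (L : List (Fin n)) (d : Fin n → ℕ) (c : k) (f : MvPolynomial (Fin n) k) :
    mderivL L d (c • f) = c • mderivL L d f := by
  induction L with
  | nil => rfl
  | cons i L ih => simp [mderivL_cons, ih, pditer_smul]

lemma mderiv_add (d : Fin n → ℕ) (f g : MvPolynomial (Fin n) k) :
    mderiv d (f + g) = mderiv d f + mderiv d g := mderivL_add _ _ _ _

lemma mderiv_smul (d : Fin n → ℕ) (c : k) (f : MvPolynomial (Fin n) k) :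
    mderiv d (c • f) = c • mderiv d f := mderivL_smul _ _ _ _

lemma pderiv_X_sub_C (i c : Fin n) (a : k) :
    pderiv i ((X c : MvPolynomial (Fin n) k) - C a) = if i = c then 1 else 0 := by
  rcases eq_or_ne i c with rfl | h
  · simp [pderiv_X_self]
  · simp [pderiv_X_of_ne h.symm, h]

lemma dvd_pderiv_self {c : Fin n} {a : k} {M : ℕ} {f : MvPolynomial (Fin n) k}
    (h : ((X c : MvPolynomial (Fin n) k) - C a) ^ (M + 1) ∣ f) :
    ((X c : MvPolynomial (Fin n) k) - C a) ^ M ∣ pderiv c f := by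
  obtain ⟨g, rfl⟩ := h
  rw [pderiv_mul]
  have hpow : pderiv c (((X c : MvPolynomial (Fin n) k) - C a) ^ (M + 1))
      = (M + 1) • ((X c : MvPolynomial (Fin n) k) - C a) ^ M •
          pderiv c ((X c : MvPolynomial (Fin n) k) - C a) :=
    Derivation.leibniz_pow _ _ _
  rw [pderiv_X_sub_C, if_pos rfl] at hpow
  refine dvd_add ⟨(M + 1 : ℕ) * g, ?_⟩ ⟨((X c : MvPolynomial (Fin n) k) - C a) * pderiv c g, by ring⟩
  rw [hpow]
  simp only [smul_eq_mul, nsmul_eq_mul, mul_one]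
  ring

lemma dvd_pderiv_ne {c i : Fin n} (hic : i ≠ c) {a : k} {M : ℕ} {f : MvPolynomial (Fin n) k}
    (h : ((X c : MvPolynomial (Fin n) k) - C a) ^ M ∣ f) :
    ((X c : MvPolynomial (Fin n) k) - C a) ^ M ∣ pderiv i f := by
  obtain ⟨g, rfl⟩ := h
  rw [pderiv_mul]
  have hpow : pderiv i (((X c : MvPolynomial (Fin n) k) - C a) ^ M) = 0 := by
    rw [Derivation.leibniz_pow, pderiv_X_sub_C, if_neg hic, smul_zero, smul_zero]
  rw [hpow, zero_mul, zero_add]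
  exact dvd_mul_right _ _

lemma dvd_pderiv {c : Fin n} {a : k} {M : ℕ} {f : MvPolynomial (Fin n) k}
    (h : ((X c : MvPolynomial (Fin n) k) - C a) ^ M ∣ f) (i : Fin n) :
    ((X c : MvPolynomial (Fin n) k) - C a) ^ (M - (if i = c then 1 else 0)) ∣ pderiv i f := by
  rcases eq_or_ne i c with rfl | hic
  · cases M with
    | zero => simpa using one_dvd _
    | succ M => simpa using dvd_pderiv_self h
  · rw [if_neg hic, Nat.sub_zero]
    exact dvd_pderiv_ne hic h

lemma dvd_pditer {c : Fin n} {a : k} {M : ℕ} {f : MvPolynomial (Fin n) k}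
    (h : ((X c : MvPolynomial (Fin n) k) - C a) ^ M ∣ f) (i : Fin n) (m : ℕ) :
    ((X c : MvPolynomial (Fin n) k) - C a) ^ (M - (if i = c then 1 else 0) * m)
      ∣ (fun h => pderiv i h)^[m] f := by
  induction m with
  | zero => simpa using h
  | succ m ih =>
    rw [Function.iterate_succ_apply']
    have h2 := dvd_pderiv ih i
    have heq : M - (if i = c then 1 else 0) * m - (if i = c then 1 else 0)
        = M - (if i = c then 1 else 0) * (m + 1) := by
      rcases eq_or_ne i c with h | h <;> simp [h] <;> omega
    exact heq ▸ h2

lemma dvd_mderivL {c : Fin n} {a : k} (L : List (Fin n)) (d : Fin n → ℕ)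
    {M : ℕ} {f : MvPolynomial (Fin n) k}
    (h : ((X c : MvPolynomial (Fin n) k) - C a) ^ M ∣ f) :
    ((X c : MvPolynomial (Fin n) k) - C a) ^ (M - (L.map fun i => if i = c then d i else 0).sum)
      ∣ mderivL L d f := by
  induction L generalizing M f with
  | nil => simpa [mderivL_nil] using h
  | cons i L ih =>
    rw [mderivL_cons]
    refine dvd_trans (pow_dvd_pow _ ?_) (dvd_pditer (ih h) i (d i))
    simp only [List.map_cons, List.sum_cons]
    rcases eq_or_ne i c with h' | h' <;> simp [h'] <;> omega

lemma dvd_mderiv {c : Fin n} {a : k} (d : Fin n → ℕ) {M : ℕ} {f : MvPolynomial (Fin n) k}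
    (h : ((X c : MvPolynomial (Fin n) k) - C a) ^ M ∣ f) :
    ((X c : MvPolynomial (Fin n) k) - C a) ^ (M - d c) ∣ mderiv d f := by
  rw [mderiv_eq_mderivL]
  have h2 := dvd_mderivL (List.finRange n) d h (c := c) (a := a)
  have heq : ((List.finRange n).map fun i => if i = c then d i else 0).sum = d c := by
    rw [← Fin.sum_univ_def (fun i => if i = c then d i else 0)]
    simp
  rw [heq] at h2
  exact h2

lemma eval_mderiv_eq_zero {c : Fin n} {a : k} {q : Fin n → k} (hq : q c = a)
    {M : ℕ} {f : MvPolynomial (Fin n) k}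
    (h : ((X c : MvPolynomial (Fin n) k) - C a) ^ M ∣ f) {d : Fin n → ℕ} (hd : d c < M) :
    eval q (mderiv d f) = 0 := by
  obtain ⟨g, hg⟩ := dvd_mderiv d h
  rw [hg, map_mul, map_pow, map_sub, eval_X, eval_C, hq, sub_self,
    zero_pow (by omega), zero_mul]

lemma iter_diag (c : Fin n) (a : k) (m : ℕ) (h : MvPolynomial (Fin n) k) :
    ∃ r : MvPolynomial (Fin n) k,
      (fun g => pderiv c g)^[m] (((X c : MvPolynomial (Fin n) k) - C a) ^ m * h)
        = ((Nat.factorial m) : MvPolynomial (Fin n) k) * h + ((X c : MvPolynomial (Fin n) k) - C a) * r := by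
  induction m generalizing h with
  | zero => exact ⟨0, by simp⟩
  | succ m ih =>
    have e1 : pderiv c (((X c : MvPolynomial (Fin n) k) - C a) ^ (m + 1) * h)
        = ((X c : MvPolynomial (Fin n) k) - C a) ^ m *
            (((m : MvPolynomial (Fin n) k) + 1) * h
              + ((X c : MvPolynomial (Fin n) k) - C a) * pderiv c h) := by
      rw [pderiv_mul]
      have hpow : pderiv c (((X c : MvPolynomial (Fin n) k) - C a) ^ (m + 1))
          = (m + 1) • ((X c : MvPolynomial (Fin n) k) - C a) ^ m •
              pderiv c ((X c : MvPolynomial (Fin n) k) - C a) :=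
        Derivation.leibniz_pow _ _ _
      rw [pderiv_X_sub_C, if_pos rfl] at hpow
      rw [hpow]
      simp only [smul_eq_mul, nsmul_eq_mul, mul_one]
      push_cast
      ring
    rw [Function.iterate_succ_apply, e1]
    obtain ⟨r, hr⟩ := ih (((m : MvPolynomial (Fin n) k) + 1) * h
      + ((X c : MvPolynomial (Fin n) k) - C a) * pderiv c h)
    refine ⟨((Nat.factorial m) : MvPolynomial (Fin n) k) * pderiv c h + r, ?_⟩
    rw [hr, Nat.factorial_succ]
    push_cast
    ring

lemma pderiv_mem_span {a : Fin n → k} {S : Set (Fin n)} {c : Fin n} (hc : c ∉ S)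
    {f : MvPolynomial (Fin n) k}
    (hf : f ∈ Ideal.span ((fun j => (X j : MvPolynomial (Fin n) k) - C (a j)) '' S)) :
    pderiv c f ∈ Ideal.span ((fun j => (X j : MvPolynomial (Fin n) k) - C (a j)) '' S) := by
  set J := Ideal.span ((fun j => (X j : MvPolynomial (Fin n) k) - C (a j)) '' S) with hJ
  have : f ∈ J ∧ pderiv c f ∈ J := by
    refine Submodule.span_induction ?_ ?_ ?_ ?_ hf
    · rintro _ ⟨j, hj, rfl⟩
      have hjc : c ≠ j := fun h => hc (h ▸ hj)
      refine ⟨Ideal.subset_span ⟨j, hj, rfl⟩, ?_⟩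
      rw [pderiv_X_sub_C, if_neg hjc]
      exact Ideal.zero_mem _
    · simp [Ideal.zero_mem]
    · rintro x y _ _ ⟨hx, hx'⟩ ⟨hy, hy'⟩
      exact ⟨Ideal.add_mem _ hx hy, by rw [map_add]; exact Ideal.add_mem _ hx' hy'⟩
    · rintro r x _ ⟨hx, hx'⟩
      refine ⟨Submodule.smul_mem _ _ hx, ?_⟩
      rw [smul_eq_mul, pderiv_mul]
      exact Ideal.add_mem _ (Ideal.mul_mem_left _ _ hx) (Ideal.mul_mem_left _ _ hx')
  exact this.2

lemma pditer_mem_span {a : Fin n → k} {S : Set (Fin n)} {c : Fin n} (hc : c ∉ S) (m : ℕ)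
    {f : MvPolynomial (Fin n) k}
    (hf : f ∈ Ideal.span ((fun j => (X j : MvPolynomial (Fin n) k) - C (a j)) '' S)) :
    (fun g => pderiv c g)^[m] f
      ∈ Ideal.span ((fun j => (X j : MvPolynomial (Fin n) k) - C (a j)) '' S) := by
  induction m with
  | zero => simpa using hf
  | succ m ih => rw [Function.iterate_succ_apply']; exact pderiv_mem_span hc ih

lemma mderivL_diag (a : Fin n → k) (e : Fin n → ℕ) :
    ∀ (L : List (Fin n)), L.Nodup → ∀ G : MvPolynomial (Fin n) k,
      ∃ r ∈ Ideal.span ((fun j => (X j : MvPolynomial (Fin n) k) - C (a j)) '' {j | j ∈ L}),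
        mderivL L e ((L.map (fun j => ((X j : MvPolynomial (Fin n) k) - C (a j)) ^ (e j))).prod * G)
          = ((L.map (fun j => Nat.factorial (e j))).prod : MvPolynomial (Fin n) k) * G + r := by
  intro L
  induction L with
  | nil =>
    intro _ G
    exact ⟨0, Ideal.zero_mem _, by simp [mderivL_nil]⟩
  | cons c L ih =>
    intro hnodup G
    have hcL : c ∉ L := (List.nodup_cons.mp hnodup).1
    have hmono : Ideal.span ((fun j => (X j : MvPolynomial (Fin n) k) - C (a j)) '' {j | j ∈ L})
        ≤ Ideal.span ((fun j => (X j : MvPolynomial (Fin n) k) - C (a j)) '' {j | j ∈ c :: L}) :=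
      Ideal.span_mono (Set.image_mono (fun j hj => List.mem_cons_of_mem c hj))
    obtain ⟨r, hrmem, hr⟩ := ih (List.nodup_cons.mp hnodup).2
      (((X c : MvPolynomial (Fin n) k) - C (a c)) ^ (e c) * G)
    rw [mderivL_cons]
    have harr : ((List.map (fun j => ((X j : MvPolynomial (Fin n) k) - C (a j)) ^ e j) (c :: L)).prod * G)
        = (List.map (fun j => ((X j : MvPolynomial (Fin n) k) - C (a j)) ^ e j) L).prod *
            (((X c : MvPolynomial (Fin n) k) - C (a c)) ^ (e c) * G) := by
      simp only [List.map_cons, List.prod_cons]; ring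
    rw [harr, hr]
    -- now apply (pderiv c)^[e c] to  ↑P * ((X c - a c)^(e c) * G) + r
    rw [pditer_add]
    obtain ⟨r2, hr2⟩ := iter_diag c (a c) (e c) G
    have hconst : (fun g => pderiv c g)^[e c]
        (((List.map (fun j => Nat.factorial (e j)) L).prod : MvPolynomial (Fin n) k) *
          (((X c : MvPolynomial (Fin n) k) - C (a c)) ^ (e c) * G))
        = ((List.map (fun j => Nat.factorial (e j)) L).prod : MvPolynomial (Fin n) k) *
            ((fun g => pderiv c g)^[e c] (((X c : MvPolynomial (Fin n) k) - C (a c)) ^ (e c) * G)) := by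
      have : ∀ u : ℕ, ∀ f : MvPolynomial (Fin n) k,
          (fun g => pderiv c g)^[e c] ((u : MvPolynomial (Fin n) k) * f)
            = (u : MvPolynomial (Fin n) k) * (fun g => pderiv c g)^[e c] f := by
        intro u f
        have : ((u : MvPolynomial (Fin n) k)) = C (u : k) := by
          simp [map_natCast C u]
        rw [this, ← smul_eq_C_mul, ← smul_eq_C_mul, pditer_smul]
      exact this _ _
    rw [hconst, hr2]
    refine ⟨((List.map (fun j => Nat.factorial (e j)) L).prod : MvPolynomial (Fin n) k) *
        (((X c : MvPolynomial (Fin n) k) - C (a c)) * r2)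
      + (fun g => pderiv c g)^[e c] r, ?_, ?_⟩
    · refine Ideal.add_mem _ ?_ ?_
      · refine Ideal.mul_mem_left _ _ (Ideal.mul_mem_right _ _ (Ideal.subset_span ?_))
        exact ⟨c, by simp, rfl⟩
      · exact hmono (pditer_mem_span (by simpa using hcL) (e c) hrmem)
    · simp only [List.map_cons, List.prod_cons]
      push_cast
      ring

lemma eval_span_zero {a : Fin n → k} {S : Set (Fin n)} {f : MvPolynomial (Fin n) k}
    (hf : f ∈ Ideal.span ((fun j => (X j : MvPolynomial (Fin n) k) - C (a j)) '' S)) :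
    eval a f = 0 := by
  have hle : Ideal.span ((fun j => (X j : MvPolynomial (Fin n) k) - C (a j)) '' S)
      ≤ RingHom.ker (eval a) := by
    rw [Ideal.span_le]
    rintro _ ⟨j, _, rfl⟩
    simp [RingHom.mem_ker]
  exact hle hf

lemma eval_mderiv_diag (a : Fin n → k) (e : Fin n → ℕ) (G : MvPolynomial (Fin n) k) :
    eval a (mderiv e ((∏ j : Fin n, ((X j : MvPolynomial (Fin n) k) - C (a j)) ^ (e j)) * G))
      = ((∏ j : Fin n, Nat.factorial (e j) : ℕ) : k) * eval a G := by
  obtain ⟨r, hrmem, hr⟩ := mderivL_diag a e (List.finRange n) (List.nodup_finRange n) G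
  rw [mderiv_eq_mderivL]
  rw [Fin.prod_univ_def, hr, map_add, map_mul, eval_span_zero hrmem, add_zero,
    Fin.prod_univ_def, map_natCast (eval a)]

end Aux

lemma functionals_independent {n t : ℕ} {k : Type*} [Field k] [CharZero k]
    (p : Fin t → Fin n → k) (hp : Function.Injective p)
    (D : Fin t → Set (Fin n → ℕ)) (hfin : ∀ i, (D i).Finite)
    [inst : ∀ i, Fintype ↥(D i)]
    (g : ((i : Fin t) × ↥(D i)) → k)
    (hg : ∀ f : MvPolynomial (Fin n) k,
      ∑ x : (i : Fin t) × ↥(D i), g x * eval (p x.1) (mderiv (x.2 : Fin n → ℕ) f) = 0) :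
    ∀ x, g x = 0 := by
  classical
  rintro ⟨i, e⟩
  by_contra hx
  set N : ℕ := 1 + Finset.univ.sup (fun l => (hfin l).toFinset.sup (fun d => Finset.univ.sup d))
    with hNdef
  have hNd : ∀ l, ∀ d ∈ D l, ∀ j, d j < N := by
    intro l d hd j
    have h1 : d j ≤ Finset.univ.sup d := Finset.le_sup (Finset.mem_univ j)
    have h2 : Finset.univ.sup d ≤ (hfin l).toFinset.sup (fun d => Finset.univ.sup d) :=
      Finset.le_sup ((hfin l).mem_toFinset.mpr hd)
    have h3 : (hfin l).toFinset.sup (fun d => Finset.univ.sup d)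
        ≤ Finset.univ.sup (fun l => (hfin l).toFinset.sup (fun d => Finset.univ.sup d)) :=
      Finset.le_sup (f := fun l => (hfin l).toFinset.sup (fun d => Finset.univ.sup d))
        (Finset.mem_univ l)
    omega
  have hcoord : ∀ l, ¬ (l = i) → ∃ c, p l c ≠ p i c :=
    fun l hl => Function.ne_iff.mp (fun h => hl (hp h))
  set c' : (Fin n → ℕ) → k := fun d => if h : d ∈ D i then g ⟨i, ⟨d, h⟩⟩ else 0 with hc'def
  have hc'coe : ∀ d : ↥(D i), c' ↑d = g ⟨i, d⟩ := by
    intro d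
    rw [hc'def]
    simp only [dif_pos d.2, Subtype.coe_eta]
  set S : Finset (Fin n → ℕ) := (hfin i).toFinset.filter (fun d => c' d ≠ 0) with hSdef
  have hSne : S.Nonempty := by
    refine ⟨↑e, Finset.mem_filter.mpr ⟨(hfin i).mem_toFinset.mpr e.2, ?_⟩⟩
    rw [hc'coe e]; exact hx
  obtain ⟨e', he'S, he'max⟩ := S.exists_maximal hSne
  have he'D : e' ∈ D i := (hfin i).mem_toFinset.mp (Finset.mem_filter.mp he'S).1
  have hce' : c' e' ≠ 0 := of_decide_eq_true (by
    have := (Finset.mem_filter.mp he'S).2; exact decide_eq_true this)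
  set G : MvPolynomial (Fin n) k := ∏ l : Fin t,
    if h : l = i then 1
    else ((X ((hcoord l h).choose) : MvPolynomial (Fin n) k)
      - C (p l ((hcoord l h).choose))) ^ N with hGdef
  set F : MvPolynomial (Fin n) k :=
    (∏ j : Fin n, ((X j : MvPolynomial (Fin n) k) - C (p i j)) ^ (e' j)) * G with hFdef
  have hzero : ∀ b ∈ (Finset.univ : Finset ((i : Fin t) × ↥(D i))),
      b ≠ ⟨i, ⟨e', he'D⟩⟩ → g b * eval (p b.1) (mderiv (b.2 : Fin n → ℕ) F) = 0 := by
    rintro ⟨l, d⟩ - hbne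
    dsimp only
    by_cases hl : l = i
    · subst hl
      have hdne : (d : Fin n → ℕ) ≠ e' := by
        intro h
        exact hbne (congrArg (Sigma.mk l) (Subtype.ext h))
      by_cases hle : e' ≤ (d : Fin n → ℕ)
      · have hlt : e' < (d : Fin n → ℕ) := lt_of_le_of_ne hle (Ne.symm hdne)
        have hgz : g ⟨l, d⟩ = 0 := by
          by_contra hgz
          have hdS : (d : Fin n → ℕ) ∈ S := Finset.mem_filter.mpr
            ⟨(hfin l).mem_toFinset.mpr d.2, by rw [hc'coe d]; exact hgz⟩
          exact (not_le_of_gt hlt) (he'max hdS hlt.le)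
        rw [hgz, zero_mul]
      · have hj : ∃ j, ¬ e' j ≤ (d : Fin n → ℕ) j := by
          by_contra hall
          push_neg at hall
          exact hle (fun j => hall j)
        obtain ⟨j, hj⟩ := hj
        have hdvd : ((X j : MvPolynomial (Fin n) k) - C (p l j)) ^ (e' j) ∣ F := by
          rw [hFdef]
          exact Dvd.dvd.mul_right (Finset.dvd_prod_of_mem _ (Finset.mem_univ j)) _
        rw [eval_mderiv_eq_zero rfl hdvd (by omega), mul_zero]
    · have hdvd : ((X ((hcoord l hl).choose) : MvPolynomial (Fin n) k)
          - C (p l ((hcoord l hl).choose))) ^ N ∣ F := by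
        rw [hFdef, hGdef]
        refine Dvd.dvd.mul_left ?_ _
        have hmem := Finset.dvd_prod_of_mem (fun l' => if h : l' = i then 1
          else ((X ((hcoord l' h).choose) : MvPolynomial (Fin n) k)
            - C (p l' ((hcoord l' h).choose))) ^ N) (Finset.mem_univ l)
        rwa [dif_neg hl] at hmem
      rw [eval_mderiv_eq_zero rfl hdvd (hNd l ↑d d.2 _), mul_zero]
  have hsum := hg F
  rw [Finset.sum_eq_single_of_mem _ (Finset.mem_univ _) hzero] at hsum
  have hdiag : eval (p i) (mderiv e' F)
      = ((∏ j : Fin n, Nat.factorial (e' j) : ℕ) : k) * eval (p i) G := by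
    rw [hFdef]; exact eval_mderiv_diag (p i) e' G
  have hGval : eval (p i) G ≠ 0 := by
    rw [hGdef, map_prod, Finset.prod_ne_zero_iff]
    intro l _
    by_cases hl : l = i
    · rw [dif_pos hl]; simp
    · rw [dif_neg hl, map_pow, map_sub, eval_X, eval_C]
      exact pow_ne_zero _ (sub_ne_zero.mpr (Ne.symm (hcoord l hl).choose_spec))
  have hfact : ((∏ j : Fin n, Nat.factorial (e' j) : ℕ) : k) ≠ 0 :=
    Nat.cast_ne_zero.mpr (Finset.prod_pos (fun j _ => Nat.factorial_pos _)).ne'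
  have hnz : eval (p i) (mderiv e' F) ≠ 0 := by
    rw [hdiag]; exact mul_ne_zero hfact hGval
  have hgz : g ⟨i, ⟨e', he'D⟩⟩ = 0 := (mul_eq_zero.mp hsum).resolve_right hnz
  apply hce'
  rw [hc'def]
  simp only [dif_pos he'D]
  exact hgz


/-- The vanishing ideal of a finite set of distinct points with multiplicity
structures given by finite lower sets `Dᵢ` has codimension `m = Σᵢ #Dᵢ`:
`dim_k k[X]/I(H) = m`. -/
theorem vanishing_ideal_quotient_dim {n : ℕ} {k : Type*} [Field k] [CharZero k]
    {t : ℕ} (p : Fin t → (Fin n → k)) (hp : Function.Injective p)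
    (D : Fin t → Set (Fin n → ℕ))
    (hfin : ∀ i, (D i).Finite) (hlow : ∀ i, IsLowerSetN (D i))
    (hne : ∀ i, (D i).Nonempty)
    (I : Ideal (MvPolynomial (Fin n) k))
    (hI : (I : Set (MvPolynomial (Fin n) k)) =
      {f | ∀ i : Fin t, ∀ d ∈ D i, MvPolynomial.eval (p i) (mderiv d f) = 0}) :
    Module.finrank k (MvPolynomial (Fin n) k ⧸ I) = ∑ i : Fin t, (D i).ncard := by
  classical
  letI : ∀ i, Fintype ↥(D i) := fun i => (hfin i).fintype
  let Φ : MvPolynomial (Fin n) k →ₗ[k] (((i : Fin t) × ↥(D i)) → k) :=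
    { toFun := fun f x => eval (p x.1) (mderiv (x.2 : Fin n → ℕ) f)
      map_add' := fun f g => by
        funext x
        simp [mderiv_add]
      map_smul' := fun c f => by
        funext x
        show eval (p x.1) (mderiv (x.2 : Fin n → ℕ) (c • f))
          = (RingHom.id k c) • (fun x : (i : Fin t) × ↥(D i) =>
              eval (p x.1) (mderiv (x.2 : Fin n → ℕ) f)) x
        rw [RingHom.id_apply, smul_eq_mul, mderiv_smul, smul_eq_C_mul, map_mul, eval_C] }
  have hker : LinearMap.ker Φ = Submodule.restrictScalars k I := by
    ext f
    constructor
    · intro hf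
      have h0 : ∀ x : (i : Fin t) × ↥(D i), eval (p x.1) (mderiv (x.2 : Fin n → ℕ) f) = 0 :=
        fun x => congrFun (LinearMap.mem_ker.mp hf) x
      show f ∈ I
      rw [← SetLike.mem_coe, hI]
      intro i d hd
      exact h0 ⟨i, ⟨d, hd⟩⟩
    · intro hf
      have hf' : f ∈ (I : Set (MvPolynomial (Fin n) k)) := hf
      rw [hI] at hf'
      exact LinearMap.mem_ker.mpr (funext fun x => hf' x.1 (x.2 : Fin n → ℕ) x.2.2)
  have e1 : Module.finrank k (MvPolynomial (Fin n) k ⧸ I)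
      = Module.finrank k ↥(LinearMap.range Φ) := by
    have eqv1 := Submodule.Quotient.restrictScalarsEquiv k
      (I : Submodule (MvPolynomial (Fin n) k) (MvPolynomial (Fin n) k))
    have eqv2 := LinearMap.quotKerEquivRange Φ
    rw [← eqv1.finrank_eq, ← eqv2.finrank_eq, hker]
  haveI hpi : FiniteDimensional k (((i : Fin t) × ↥(D i)) → k) := inferInstance
  haveI hfd : FiniteDimensional k ↥(LinearMap.range Φ) :=
    FiniteDimensional.finiteDimensional_submodule _
  haveI hfd2 : FiniteDimensional k (Module.Dual k ↥(LinearMap.range Φ)) := inferInstance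
  have hcard : Module.finrank k ↥(LinearMap.range Φ)
      = Fintype.card ((i : Fin t) × ↥(D i)) := by
    refine le_antisymm ?_ ?_
    · have hle := Submodule.finrank_le (LinearMap.range Φ)
      rwa [Module.finrank_fintype_fun_eq_card] at hle
    · let μ : ((i : Fin t) × ↥(D i)) → Module.Dual k ↥(LinearMap.range Φ) :=
        fun x => (LinearMap.proj x).comp (LinearMap.range Φ).subtype
      have hind : LinearIndependent k μ := by
        rw [Fintype.linearIndependent_iff]
        intro g hg0
        refine functionals_independent p hp D hfin g ?_
        intro f
        have hmem : Φ f ∈ LinearMap.range Φ := ⟨f, rfl⟩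
        calc ∑ x : (i : Fin t) × ↥(D i), g x * eval (p x.1) (mderiv (x.2 : Fin n → ℕ) f)
            = ∑ x : (i : Fin t) × ↥(D i),
                (g x • μ x) (⟨Φ f, hmem⟩ : ↥(LinearMap.range Φ)) :=
              Finset.sum_congr rfl fun x _ => rfl
          _ = (∑ x : (i : Fin t) × ↥(D i), g x • μ x)
                (⟨Φ f, hmem⟩ : ↥(LinearMap.range Φ)) := (LinearMap.sum_apply _ _ _).symm
          _ = 0 := by rw [hg0]; rfl
      have hle := hind.fintype_card_le_finrank
      rwa [Subspace.dual_finrank_eq] at hle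
  have hcard2 : Fintype.card ((i : Fin t) × ↥(D i)) = ∑ i : Fin t, (D i).ncard := by
    rw [Fintype.card_sigma]
    exact Finset.sum_congr rfl fun i _ => by
      rw [← Nat.card_eq_fintype_card, Nat.card_coe_set_eq]
  rw [e1, hcard, hcard2]
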